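/- Let Ω be countably infinite, let W(x₀,…,x_n) be a reduced word using x₀ with block decomposition W ≡ V_{L'(W)-1}⋯V₀, let f₁,…,f_n ∈ Sym(Ω), and let u be a finite partial bijection on Ω. Then the number of fixed points of W(ū, f₁,…,f_n), for any ū ∈ Sym(Ω) extending u with the property that every non-injective itinerary of W with respect to (ū, f₁,…,f_n) 'collapses' already at the level of u, is bounded by |{i : V_i ≡ x₀^{±1}}|·|dom(u)| + Σ_{i : V_i ≢ x₀^{±1}} |fix(V_i(f₁,…,f_n))|. -/

import Mathlib

/-- The word `w` uses the letter `x₀`. -/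
def Uses0 {n : ℕ} (w : FreeGroup (Fin (n + 1))) : Prop :=
  ∃ b : Bool, ((0 : Fin (n + 1)), b) ∈ FreeGroup.toWord w

/-- `r` is (the graph relation of) a partial bijection on `Ω`. -/
def IsPBijRel {Ω : Type} (r : Ω → Ω → Prop) : Prop :=
  (∀ a b b', r a b → r a b' → b = b') ∧ (∀ a a' b, r a b → r a' b → a = a')

/-- The relation obtained by applying a single letter (a generator or its inverse)
interpreted by the partial bijections `f`. -/
def evalLetter {Ω ι : Type} (f : ι → Ω → Ω → Prop) : ι × Bool → Ω → Ω → Prop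
  | (i, true) => f i
  | (i, false) => fun a b => f i b a

/-- The relation "the word `w`, evaluated at the partial bijections `f`, maps `a` to `b`":
the letters of `w` are applied in succession, rightmost first. -/
def evalWord {Ω ι : Type} [DecidableEq ι] (f : ι → Ω → Ω → Prop) (w : FreeGroup ι) :
    Ω → Ω → Prop :=
  (FreeGroup.toWord w).foldr
    (fun l rest => fun a b => ∃ m, rest a m ∧ evalLetter f l m b) (fun a b => a = b)

/-- An itinerary with respect to the sequence of partial bijections `V (L-1), …, V 0`
(the evaluated blocks of a word): a tuple `t_L, …, t_0` of elements of `Ω ⊔ {c}` (with `c`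
rendered as `none`), not all `c`, moved forwards and backwards through the blocks as far as
defined, with `c` propagating outward once movement becomes undefined. -/
def IsItinerary {Ω : Type} {L : ℕ} (V : Fin L → Ω → Ω → Prop)
    (t : Fin (L + 1) → Option Ω) : Prop :=
  (∃ i, (t i).isSome) ∧
  (∀ i : Fin L, ∀ a : Ω, t i.castSucc = some a →
      ((∀ b, V i a b → t i.succ = some b) ∧ ((¬ ∃ b, V i a b) → t i.succ = none))) ∧
  (∀ i : Fin L, ∀ b : Ω, t i.succ = some b →
      ((∀ a, V i a b → t i.castSucc = some a) ∧ ((¬ ∃ a, V i a b) → t i.castSucc = none))) ∧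
  (∀ i j k : Fin (L + 1), i < j → j ≤ k → (t i).isSome → t j = none → t k = none) ∧
  (∀ i j k : Fin (L + 1), k ≤ j → j < i → (t i).isSome → t j = none → t k = none)

def IsPartialBijGraph {Ω : Type} (f : Set (Ω × Ω)) : Prop :=
  (∀ p ∈ f, ∀ q ∈ f, p.1 = q.1 → p.2 = q.2) ∧ (∀ p ∈ f, ∀ q ∈ f, p.2 = q.2 → p.1 = q.1)

section Aux

set_option linter.unreachableTactic false
set_option linter.unusedTactic false

theorem foldr_graph {Ω ι : Type} (g : ι → Equiv.Perm Ω) (l : List (ι × Bool)) (a b : Ω) :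
    l.foldr (fun l rest => fun a b => ∃ m, rest a m ∧
        evalLetter (fun i a b => g i a = b) l m b) (fun a b => a = b) a b ↔
      (l.map fun x => cond x.2 (g x.1) (g x.1)⁻¹).prod a = b := by
  induction l generalizing b with
  | nil => simp
  | cons hd tl ih =>
    obtain ⟨i, bl⟩ := hd
    cases bl
    · constructor
      · rintro ⟨m, h1, h2⟩
        rw [ih] at h1
        simp only [evalLetter] at h2
        simp [List.prod_cons, Equiv.Perm.mul_apply, h1, ← h2]
      · intro h
        refine ⟨(List.map (fun x => cond x.2 (g x.1) (g x.1)⁻¹) tl).prod a, (ih _).2 rfl, ?_⟩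
        simp only [evalLetter]
        simp only [List.map_cons, List.prod_cons, Equiv.Perm.mul_apply] at h
        rw [← h]; simp
    · constructor
      · rintro ⟨m, h1, h2⟩
        rw [ih] at h1
        simp only [evalLetter] at h2
        simp [List.prod_cons, Equiv.Perm.mul_apply, h1, h2]
      · intro h
        refine ⟨(List.map (fun x => cond x.2 (g x.1) (g x.1)⁻¹) tl).prod a, (ih _).2 rfl, ?_⟩
        simp only [evalLetter]
        simpa [List.prod_cons, Equiv.Perm.mul_apply] using h

theorem evalWord_graph {Ω ι : Type} [DecidableEq ι] (g : ι → Equiv.Perm Ω)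
    (w : FreeGroup ι) (a b : Ω) :
    evalWord (fun i a b => g i a = b) w a b ↔ FreeGroup.lift g w a = b := by
  rw [evalWord, foldr_graph]
  conv_rhs => rw [← FreeGroup.mk_toWord (x := w), FreeGroup.lift_mk]

theorem foldr_congr {Ω ι : Type} (V V' : ι → Ω → Ω → Prop) (l : List (ι × Bool))
    (h : ∀ p ∈ l, ∀ a b, V p.1 a b ↔ V' p.1 a b) (a b : Ω) :
    l.foldr (fun l rest => fun a b => ∃ m, rest a m ∧ evalLetter V l m b)
        (fun a b => a = b) a b ↔
      l.foldr (fun l rest => fun a b => ∃ m, rest a m ∧ evalLetter V' l m b)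
        (fun a b => a = b) a b := by
  induction l generalizing b with
  | nil => simp
  | cons hd tl ih =>
    obtain ⟨i, bl⟩ := hd
    have hhd := h (i, bl) List.mem_cons_self
    have htl : ∀ p ∈ tl, ∀ a b, V p.1 a b ↔ V' p.1 a b :=
      fun p hp => h p (List.mem_cons_of_mem _ hp)
    simp only [List.foldr_cons]
    constructor
    · rintro ⟨m, h1, h2⟩
      refine ⟨m, (ih htl m).mp h1, ?_⟩
      cases bl <;> simp only [evalLetter] at h2 ⊢ <;>
        first | exact (hhd _ _).mp h2 | exact (hhd _ _).mp h2
    · rintro ⟨m, h1, h2⟩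
      refine ⟨m, (ih htl m).mpr h1, ?_⟩
      cases bl <;> simp only [evalLetter] at h2 ⊢ <;>
        first | exact (hhd _ _).mpr h2 | exact (hhd _ _).mpr h2

theorem foldr_mono {Ω ι : Type} (V V' : ι → Ω → Ω → Prop) (l : List (ι × Bool))
    (h : ∀ i a b, V i a b → V' i a b) (a b : Ω) :
    l.foldr (fun l rest => fun a b => ∃ m, rest a m ∧ evalLetter V l m b)
        (fun a b => a = b) a b →
      l.foldr (fun l rest => fun a b => ∃ m, rest a m ∧ evalLetter V' l m b)
        (fun a b => a = b) a b := by
  induction l generalizing b with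
  | nil => exact id
  | cons hd tl ih =>
    obtain ⟨i, bl⟩ := hd
    rintro ⟨m, h1, h2⟩
    refine ⟨m, ih m h1, ?_⟩
    cases bl <;> simp only [evalLetter] at h2 ⊢ <;> exact h _ _ _ h2

theorem evalWord_mono {Ω ι : Type} [DecidableEq ι] (V V' : ι → Ω → Ω → Prop)
    (h : ∀ i a b, V i a b → V' i a b) (w : FreeGroup ι) (a b : Ω) :
    evalWord V w a b → evalWord V' w a b := foldr_mono V V' _ h a b

theorem evalWord_congr_of_notMem {Ω ι : Type} [DecidableEq ι] (V V' : ι → Ω → Ω → Prop)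
    (w : FreeGroup ι) (h : ∀ p ∈ FreeGroup.toWord w, ∀ a b, V p.1 a b ↔ V' p.1 a b)
    (a b : Ω) : evalWord V w a b ↔ evalWord V' w a b := foldr_congr V V' _ h a b

theorem evalWord_of' {Ω ι : Type} [DecidableEq ι] (V : ι → Ω → Ω → Prop) (i : ι) (a b : Ω) :
    evalWord V (FreeGroup.of i) a b ↔ V i a b := by
  simp [evalWord, FreeGroup.toWord_of, evalLetter]

theorem evalWord_of_inv {Ω ι : Type} [DecidableEq ι] (V : ι → Ω → Ω → Prop) (i : ι) (a b : Ω) :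
    evalWord V (FreeGroup.of i)⁻¹ a b ↔ V i b a := by
  simp [evalWord, FreeGroup.toWord_inv, FreeGroup.toWord_of, FreeGroup.invRev, evalLetter]

theorem encard_biUnion_le' {ι α : Type*} (F : Finset ι) (s : ι → Set α) :
    (⋃ i ∈ F, s i).encard ≤ ∑ i ∈ F, (s i).encard := by
  classical
  induction F using Finset.induction_on with
  | empty => simp
  | insert a F h ih =>
    rw [Finset.set_biUnion_insert, Finset.sum_insert h]
    exact le_trans (Set.encard_union_le _ _) (add_le_add le_rfl ih)

theorem encard_singleton_prod {α β : Type*} (k : α) (s : Set β) :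
    (({k} : Set α) ×ˢ s).encard = s.encard := by
  rw [Set.singleton_prod]
  exact Function.Injective.encard_image (fun a b h => by simpa using h) s

end Aux

open scoped Classical in
/-- Fixed-point bound: if `W` is a reduced word using `x₀` with block decomposition
`W ≡ B (L-1) ⋯ B 0`, `f₁, …, fₙ` are permutations, `u` is a finite partial bijection, and
`ū` is a permutation extending `u` such that every non-injective itinerary of `W` with respect
to `(ū, f₁, …, fₙ)` already collapses at the level of `u`, then the number of fixed points of
`W(ū, f₁, …, fₙ)` is at most
`|{i : Bᵢ ≡ x₀^{±1}}| ⋅ |dom u| + Σ_{i : Bᵢ ≢ x₀^{±1}} |fix(Bᵢ(f₁,…,fₙ))|`. -/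
theorem stmt_15 (Ω : Type) [Countable Ω] [Infinite Ω] (n L : ℕ)
    (W : FreeGroup (Fin (n + 1))) (hW : Uses0 W)
    (B : Fin L → FreeGroup (Fin (n + 1)))
    (hdecomp : W = (List.ofFn B).reverse.prod)
    (hblocks : ∀ i, B i = FreeGroup.of 0 ∨ B i = (FreeGroup.of 0)⁻¹ ∨
      (B i ≠ 1 ∧ ¬ Uses0 (B i)))
    (hmax : ∀ i j : Fin L, (j : ℕ) = (i : ℕ) + 1 → ¬(¬ Uses0 (B i) ∧ ¬ Uses0 (B j)))
    (f : Fin n → Equiv.Perm Ω)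
    (u : Set (Ω × Ω)) (hufin : u.Finite) (hu : IsPartialBijGraph u)
    (ub : Equiv.Perm Ω) (hub : ∀ p ∈ u, ub p.1 = p.2)
    (hcollapse : ∀ t' : Fin (L + 1) → Option Ω,
      IsItinerary (fun i =>
        evalWord (Fin.cons (fun a b => ub a = b) (fun i a b => f i a = b)) (B i)) t' →
      (∃ i j : Fin (L + 1), i < j ∧ ∃ a : Ω, t' i = some a ∧ t' j = some a) →
      ∃ t : Fin (L + 1) → Option Ω,
        IsItinerary (fun i =>
          evalWord (Fin.cons (fun a b => (a, b) ∈ u) (fun i a b => f i a = b)) (B i)) t ∧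
        ∃ i₀ j₀ : Fin (L + 1), i₀ < j₀ ∧ (∃ a : Ω, t i₀ = some a ∧ t j₀ = some a) ∧
          t i₀ = t' i₀) :
    {x : Ω | FreeGroup.lift (Fin.cons ub f) W x = x}.encard ≤
      {i : Fin L | B i = FreeGroup.of 0 ∨ B i = (FreeGroup.of 0)⁻¹}.encard *
          (Prod.fst '' u).encard +
        ∑ i : Fin L, if B i = FreeGroup.of 0 ∨ B i = (FreeGroup.of 0)⁻¹ then 0
          else {x : Ω | FreeGroup.lift (Fin.cons ub f) (B i) x = x}.encard := by
  classical
  set g : Fin (n + 1) → Equiv.Perm Ω := Fin.cons ub f with hg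
  -- the "bar" interpretation is the graph of `g`
  have hFbar : (Fin.cons (fun a b => ub a = b) (fun i a b => f i a = b) :
      Fin (n + 1) → Ω → Ω → Prop) = fun j a b => g j a = b := by
    funext j
    induction j using Fin.cases <;> simp [hg]
  rw [hFbar] at hcollapse
  set Vbar : Fin L → Ω → Ω → Prop := fun i => evalWord (fun j a b => g j a = b) (B i) with hVbardef
  have hVbar : ∀ i a b, Vbar i a b ↔ FreeGroup.lift g (B i) a = b :=
    fun i a b => evalWord_graph g (B i) a b
  set Fu : Fin (n + 1) → Ω → Ω → Prop :=
    Fin.cons (fun a b => (a, b) ∈ u) (fun i a b => f i a = b) with hFu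
  set Vu : Fin L → Ω → Ω → Prop := fun i => evalWord Fu (B i) with hVudef
  have husub : ∀ j (a b : Ω), Fu j a b → g j a = b := by
    intro j a b
    induction j using Fin.cases with
    | zero => intro h; simp only [hFu, Fin.cons_zero] at h; simp [hg]; exact hub (a, b) h
    | succ i => simp [hFu, hg]
  have hVuVbar : ∀ i (a b : Ω), Vu i a b → Vbar i a b :=
    fun i a b => evalWord_mono Fu _ husub (B i) a b
  -- values of the partial evaluations
  set val : ℕ → Ω → Ω := fun m x => FreeGroup.lift g (((List.ofFn B).take m).reverse.prod) x
    with hvaldef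
  have hval0 : ∀ x, val 0 x = x := by simp [hvaldef]
  have hvalinj : ∀ m, Function.Injective (val m) :=
    fun m => (FreeGroup.lift g (((List.ofFn B).take m).reverse.prod)).injective
  have hvalsucc : ∀ (m : ℕ) (h : m < L) (x : Ω),
      val (m + 1) x = FreeGroup.lift g (B ⟨m, h⟩) (val m x) := by
    intro m h x
    have hlen : m < (List.ofFn B).length := by simpa using h
    have : (List.ofFn B).take (m + 1) = (List.ofFn B).take m ++ [B ⟨m, h⟩] := by
      rw [List.take_succ]
      congr 1
      rw [List.getElem?_eq_getElem hlen]
      simp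
    simp [hvaldef, this, Equiv.Perm.mul_apply]
  have hvalL : ∀ x, val L x = FreeGroup.lift g W x := by
    intro x
    have : (List.ofFn B).take L = List.ofFn B := by
      apply List.take_of_length_le; simp
    simp [hvaldef, this, hdecomp]
  -- L is positive
  have L0 : 0 < L := by
    rcases Nat.eq_zero_or_pos L with h | h
    · exfalso
      subst h
      have : W = 1 := by simpa using hdecomp
      obtain ⟨b, hb⟩ := hW
      rw [this, FreeGroup.toWord_one] at hb
      simp at hb
    · exact h
  -- basic facts about x₀ and x₀⁻¹
  have hofne : (FreeGroup.of (0 : Fin (n + 1))) ≠ (FreeGroup.of 0)⁻¹ := by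
    intro h
    have := congrArg FreeGroup.toWord h
    rw [FreeGroup.toWord_of, FreeGroup.toWord_inv, FreeGroup.toWord_of] at this
    simp [FreeGroup.invRev] at this
  have hUses_of : Uses0 (FreeGroup.of 0 : FreeGroup (Fin (n + 1))) :=
    ⟨true, by simp [FreeGroup.toWord_of]⟩
  have hUses_ofinv : Uses0 ((FreeGroup.of 0)⁻¹ : FreeGroup (Fin (n + 1))) :=
    ⟨false, by simp [FreeGroup.toWord_inv, FreeGroup.toWord_of, FreeGroup.invRev]⟩
  -- on blocks avoiding x₀ the two interpretations agree
  have hVuVbar_eq : ∀ i, ¬ Uses0 (B i) → ∀ a b, Vu i a b ↔ Vbar i a b := by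
    intro i hni a b
    refine evalWord_congr_of_notMem Fu _ (B i) ?_ a b
    intro p hp a' b'
    have hp1 : p.1 ≠ 0 := by
      intro h0
      exact hni ⟨p.2, by rwa [← h0, Prod.mk.eta]⟩
    obtain ⟨j, hj⟩ := Fin.exists_succ_eq.2 hp1
    rw [← hj]
    simp [hFu, hg]
  set xblk : Fin L → Prop := fun i => B i = FreeGroup.of 0 ∨ B i = (FreeGroup.of 0)⁻¹
    with hxblk
  set pos : Fin L → ℕ := fun k => if B k = (FreeGroup.of 0)⁻¹ then (k : ℕ) + 1 else (k : ℕ)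
    with hpos
  set S : Set Ω := {x : Ω | FreeGroup.lift g W x = x} with hS
  -- key existence lemma
  have hkey : ∀ x ∈ S, ∃ k : Fin L,
      (xblk k ∧ val (pos k) x ∈ Prod.fst '' u) ∨
      (¬ xblk k ∧ FreeGroup.lift g (B k) (val (pos k) x) = val (pos k) x) := by
    intro x hx
    have hxfix : FreeGroup.lift g W x = x := hx
    -- the itinerary of the fixed point x
    set t' : Fin (L + 1) → Option Ω := fun i => some (val (i : ℕ) x) with ht'
    have hIt' : IsItinerary Vbar t' := by
      refine ⟨⟨0, rfl⟩, ?_, ?_, ?_, ?_⟩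
      · intro i a ha
        have haa : val (i : ℕ) x = a := by
          have := Option.some.inj ha
          simpa using this
        constructor
        · intro b hb
          rw [hVbar] at hb
          have : b = val ((i : ℕ) + 1) x := by
            rw [hvalsucc (i : ℕ) i.isLt x, Fin.eta, ← hb, haa]
          simp [ht', this]
        · intro hne
          exact absurd ⟨FreeGroup.lift g (B i) a, (hVbar i a _).2 rfl⟩ hne
      · intro i b hb
        have hbb : val ((i : ℕ) + 1) x = b := by
          have := Option.some.inj hb
          simpa using this
        constructor
        · intro a hab
          rw [hVbar] at hab
          have : a = val (i : ℕ) x := by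
            apply (FreeGroup.lift g (B i)).injective
            rw [hab, ← hbb, hvalsucc (i : ℕ) i.isLt x, Fin.eta]
          simp [ht', this]
        · intro hne
          exact absurd ⟨(FreeGroup.lift g (B i)).symm b,
            (hVbar i _ _).2 (by simp)⟩ hne
      · intro i j k _ _ _ hnone
        exact absurd hnone (by simp [ht'])
      · intro i j k _ _ _ hnone
        exact absurd hnone (by simp [ht'])
    have hnoninj : ∃ i j : Fin (L + 1), i < j ∧ ∃ a : Ω, t' i = some a ∧ t' j = some a := by
      refine ⟨⟨0, by omega⟩, ⟨L, by omega⟩, ?_, x, ?_, ?_⟩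
      · simp [Fin.lt_def]; omega
      · simp [ht', hval0]
      · simp only [ht']
        rw [hvalL, hxfix]
    obtain ⟨t, It, i₀, j₀, hij, ⟨a, ha1, ha2⟩, hsame⟩ := hcollapse t' hIt' hnoninj
    obtain ⟨-, fwd, bwd, propF, propB⟩ := It
    have hijv : (i₀ : ℕ) < (j₀ : ℕ) := hij
    have hj₀L : (j₀ : ℕ) ≤ L := by omega
    have hi0 : t i₀ = some (val (i₀ : ℕ) x) := hsame
    -- agreement between t and the itinerary of x on [i₀, j₀]
    have hagree : ∀ (m : ℕ) (hm1 : (i₀ : ℕ) ≤ m) (hm2 : m ≤ (j₀ : ℕ)),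
        t ⟨m, by omega⟩ = some (val m x) := by
      intro m hm1
      induction m, hm1 using Nat.le_induction with
      | base =>
        intro _
        have he : (⟨(i₀ : ℕ), by omega⟩ : Fin (L + 1)) = i₀ := Fin.ext rfl
        rw [he]
        exact hi0
      | succ m hm ih =>
        intro hm2
        have ihm := ih (by omega)
        have hmL : m < L := by omega
        set K : Fin L := ⟨m, hmL⟩ with hK
        have hcast : K.castSucc = (⟨m, by omega⟩ : Fin (L + 1)) := by
          apply Fin.ext; simp [hK]
        have hsucc : K.succ = (⟨m + 1, by omega⟩ : Fin (L + 1)) := by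
          apply Fin.ext; simp [hK]
        have hsome : ∃ b, t K.succ = some b := by
          cases hb : t K.succ with
          | some b => exact ⟨b, rfl⟩
          | none =>
            exfalso
            have hlt : i₀ < K.succ := by
              rw [Fin.lt_def, hsucc]; simpa using by omega
            have hle : K.succ ≤ j₀ := by
              rw [Fin.le_def, hsucc]; simpa using hm2
            have := propF i₀ K.succ j₀ hlt hle (by rw [ha1]; rfl) hb
            rw [ha2] at this
            cases this
        obtain ⟨b, hb⟩ := hsome
        have hex : ∃ a', Vu K a' b := by
          by_contra h
          have := (bwd K b hb).2 h
          rw [hcast, ihm] at this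
          cases this
        obtain ⟨a', ha'⟩ := hex
        have hca := (bwd K b hb).1 a' ha'
        rw [hcast, ihm] at hca
        have ha'eq : a' = val m x := (Option.some.inj hca).symm
        subst ha'eq
        have hVb := hVuVbar K _ _ ha'
        rw [hVbar] at hVb
        have hbeq : b = val (m + 1) x := by
          rw [← hVb, hvalsucc m hmL x]
        rw [hsucc] at hb
        rw [hb, hbeq]
    -- the u-relation holds between consecutive agreed values
    have hstep : ∀ (K : Fin L), (i₀ : ℕ) ≤ (K : ℕ) → (K : ℕ) + 1 ≤ (j₀ : ℕ) →
        Vu K (val (K : ℕ) x) (val ((K : ℕ) + 1) x) := by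
      intro K hK1 hK2
      have hcast : K.castSucc = (⟨(K : ℕ), by omega⟩ : Fin (L + 1)) := by
        apply Fin.ext; simp
      have hsucc : K.succ = (⟨(K : ℕ) + 1, by omega⟩ : Fin (L + 1)) := by
        apply Fin.ext; simp
      have h1 : t K.castSucc = some (val (K : ℕ) x) := by
        rw [hcast]; exact hagree _ hK1 (by omega)
      have h2 : t K.succ = some (val ((K : ℕ) + 1) x) := by
        rw [hsucc]; exact hagree _ (by omega) hK2
      have hex : ∃ a', Vu K a' (val ((K : ℕ) + 1) x) := by
        by_contra h
        have := (bwd K _ h2).2 h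
        rw [h1] at this
        cases this
      obtain ⟨a', ha'⟩ := hex
      have hca := (bwd K _ h2).1 a' ha'
      rw [h1] at hca
      have : a' = val (K : ℕ) x := (Option.some.inj hca).symm
      rwa [this] at ha'
    -- endpoint values
    have haeq : a = val (i₀ : ℕ) x := by
      rw [hi0] at ha1
      exact (Option.some.inj ha1).symm
    have haj : a = val (j₀ : ℕ) x := by
      have := hagree (j₀ : ℕ) (by omega) le_rfl
      have he : (⟨(j₀ : ℕ), by omega⟩ : Fin (L + 1)) = j₀ := Fin.ext rfl
      rw [he] at this
      rw [this] at ha2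
      exact (Option.some.inj ha2).symm
    by_cases hexk : ∃ K : Fin L, (i₀ : ℕ) ≤ (K : ℕ) ∧ (K : ℕ) + 1 ≤ (j₀ : ℕ) ∧ xblk K
    · obtain ⟨K, h1, h2, h3⟩ := hexk
      refine ⟨K, Or.inl ⟨h3, ?_⟩⟩
      have hst := hstep K h1 h2
      rcases h3 with h | h
      · have hp : pos K = (K : ℕ) := by
          rw [hpos]; exact if_neg (by rw [h]; exact hofne)
        have hst2 : evalWord Fu (B K) (val (K : ℕ) x) (val ((K : ℕ) + 1) x) := hst
        rw [h, evalWord_of'] at hst2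
        have hst' : (val (K : ℕ) x, val ((K : ℕ) + 1) x) ∈ u := by
          simpa [hFu] using hst2
        rw [hp]
        exact ⟨_, hst', rfl⟩
      · have hp : pos K = (K : ℕ) + 1 := by
          rw [hpos]; exact if_pos h
        have hst2 : evalWord Fu (B K) (val (K : ℕ) x) (val ((K : ℕ) + 1) x) := hst
        rw [h, evalWord_of_inv] at hst2
        have hst' : (val ((K : ℕ) + 1) x, val (K : ℕ) x) ∈ u := by
          simpa [hFu] using hst2
        rw [hp]
        exact ⟨_, hst', rfl⟩
    · have hfblk : ∀ K : Fin L, (i₀ : ℕ) ≤ (K : ℕ) → (K : ℕ) + 1 ≤ (j₀ : ℕ) →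
          ¬ Uses0 (B K) := by
        intro K hk1 hk2
        rcases hblocks K with h | h | h
        · exact absurd ⟨K, hk1, hk2, Or.inl h⟩ hexk
        · exact absurd ⟨K, hk1, hk2, Or.inr h⟩ hexk
        · exact h.2
      have hj2 : (j₀ : ℕ) = (i₀ : ℕ) + 1 := by
        by_contra hne
        have h2 : (i₀ : ℕ) + 2 ≤ (j₀ : ℕ) := by omega
        have hK1L : (i₀ : ℕ) < L := by omega
        have hK2L : (i₀ : ℕ) + 1 < L := by omega
        exact hmax ⟨(i₀ : ℕ), hK1L⟩ ⟨(i₀ : ℕ) + 1, hK2L⟩ rfl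
          ⟨hfblk _ le_rfl (by simp; omega), hfblk _ (by simp) (by simp; omega)⟩
      have hi₀L : (i₀ : ℕ) < L := by omega
      set K : Fin L := ⟨(i₀ : ℕ), hi₀L⟩ with hK
      have hnu : ¬ Uses0 (B K) := hfblk K le_rfl (by simp [hK]; omega)
      have hnx : ¬ xblk K := by
        rintro (h | h)
        · exact hnu (by rw [h]; exact hUses_of)
        · exact hnu (by rw [h]; exact hUses_ofinv)
      refine ⟨K, Or.inr ⟨hnx, ?_⟩⟩
      have hst := hstep K (by simp [hK]) (by simp [hK]; omega)
      have hvv : val ((K : ℕ) + 1) x = val (K : ℕ) x := by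
        have h1 : (K : ℕ) + 1 = (j₀ : ℕ) := by simp [hK]; omega
        have h2 : (K : ℕ) = (i₀ : ℕ) := by simp [hK]
        rw [h1, h2, ← haj, ← haeq]
      rw [hvv] at hst
      have hVb := (hVuVbar_eq K hnu _ _).1 hst
      rw [hVbar] at hVb
      have hp : pos K = (K : ℕ) := by
        rw [hpos]; exact if_neg (fun h => hnu (by rw [h]; exact hUses_ofinv))
      rw [hp]
      exact hVb
  -- the injection
  set T : Set (Fin L × Ω) := {q | (xblk q.1 ∧ q.2 ∈ Prod.fst '' u) ∨
      (¬ xblk q.1 ∧ FreeGroup.lift g (B q.1) q.2 = q.2)} with hT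
  set Φ : Ω → Fin L × Ω := fun x =>
    if h : ∃ k : Fin L, (xblk k ∧ val (pos k) x ∈ Prod.fst '' u) ∨
        (¬ xblk k ∧ FreeGroup.lift g (B k) (val (pos k) x) = val (pos k) x) then
      (h.choose, val (pos h.choose) x)
    else (⟨0, L0⟩, Classical.arbitrary Ω) with hΦ
  have hmaps : Set.MapsTo Φ S T := by
    intro x hx
    have h : ∃ k : Fin L, (xblk k ∧ val (pos k) x ∈ Prod.fst '' u) ∨
        (¬ xblk k ∧ FreeGroup.lift g (B k) (val (pos k) x) = val (pos k) x) := hkey x hx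
    simp only [hΦ, dif_pos h]
    exact h.choose_spec
  have hinj : Set.InjOn Φ S := by
    intro x hx y hy hxy
    have h1 := hkey x hx
    have h2 := hkey y hy
    simp only [hΦ, dif_pos h1, dif_pos h2, Prod.mk.injEq] at hxy
    obtain ⟨hk, hv⟩ := hxy
    rw [hk] at hv
    exact hvalinj _ hv
  have hST : S.encard ≤ T.encard := Set.encard_le_encard_of_injOn hmaps hinj
  -- bound the cardinality of T
  set sfun : Fin L → Set Ω := fun k =>
    if xblk k then Prod.fst '' u else {x : Ω | FreeGroup.lift g (B k) x = x} with hsfun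
  have hTU : T = ⋃ k, ({k} : Set (Fin L)) ×ˢ sfun k := by
    ext ⟨k, c⟩
    simp only [hT, Set.mem_setOf_eq, Set.mem_iUnion, Set.mem_prod, Set.mem_singleton_iff]
    constructor
    · rintro (⟨h1, h2⟩ | ⟨h1, h2⟩)
      · exact ⟨k, rfl, by rw [hsfun]; simp only [if_pos h1]; exact h2⟩
      · exact ⟨k, rfl, by rw [hsfun]; simp only [if_neg h1]; exact h2⟩
    · rintro ⟨k', hkk, hc⟩
      subst hkk
      by_cases h1 : xblk k
      · rw [hsfun] at hc; simp only [if_pos h1] at hc; exact Or.inl ⟨h1, hc⟩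
      · rw [hsfun] at hc; simp only [if_neg h1] at hc; exact Or.inr ⟨h1, hc⟩
  have hTle : T.encard ≤ ∑ k : Fin L, (sfun k).encard := by
    rw [hTU]
    have : (⋃ k, ({k} : Set (Fin L)) ×ˢ sfun k) =
        ⋃ k ∈ Finset.univ, ({k} : Set (Fin L)) ×ˢ sfun k := by simp
    rw [this]
    refine le_trans (encard_biUnion_le' _ _) ?_
    refine le_of_eq (Finset.sum_congr rfl ?_)
    intro k _
    exact encard_singleton_prod k (sfun k)
  -- final computation
  refine le_trans hST (le_trans hTle (le_of_eq ?_))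
  have hsplit : ∀ k : Fin L, (sfun k).encard =
      (if xblk k then (Prod.fst '' u).encard else 0) +
      (if xblk k then 0 else {x : Ω | FreeGroup.lift g (B k) x = x}.encard) := by
    intro k
    by_cases h : xblk k <;> simp [hsfun, h]
  rw [Finset.sum_congr rfl (fun k _ => hsplit k), Finset.sum_add_distrib]
  congr 1
  · rw [Finset.sum_ite, Finset.sum_const, Finset.sum_const, smul_zero, add_zero,
      nsmul_eq_mul]
    congr 1
    have : {i : Fin L | B i = FreeGroup.of 0 ∨ B i = (FreeGroup.of 0)⁻¹} =
        ↑(Finset.univ.filter xblk) := by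
      ext i; simp [hxblk]
    rw [this, Set.encard_coe_eq_coe_finsetCard]
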